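/- Let n ≥ 2 and consider the left-multiplication action of GL_n on the space M of n×n matrices over an algebraically closed field of characteristic 0. For 1 ≤ r ≤ n−1, the map sending a matrix of rank exactly r to its kernel is a surjective GL_n-equivariant morphism from the rank-r locus Y_r ⊆ M to the Grassmannian Gr(n−r, n), and every L-point of Gr(n−r, n) (L any field extension) lifts to an L-point of Y_r. Consequently the essential dimension of the quotient stack [M/GL_n] is at least max_{1 ≤ r ≤ n−1} dim Gr(n−r, n) = ⌊n²/4⌋. -/

import Mathlib

set_option maxHeartbeats 1000000

universe u

open Matrix

section Aux

variable {L : Type*} [Field L]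

/-- multiplying by an invertible matrix does not change the kernel. -/
lemma aux_ker_unit_mul {n : ℕ} (g : Matrix.GeneralLinearGroup (Fin n) L)
    (m : Matrix (Fin n) (Fin n) L) :
    LinearMap.ker (((g : Matrix (Fin n) (Fin n) L) * m).mulVecLin) =
      LinearMap.ker m.mulVecLin := by
  rw [Matrix.mulVecLin_mul, LinearMap.ker_comp]
  have hg : LinearMap.ker (g : Matrix (Fin n) (Fin n) L).mulVecLin = ⊥ := by
    rw [Matrix.ker_mulVecLin_eq_bot_iff]
    intro v hv
    have h1 : ((g⁻¹ : Matrix.GeneralLinearGroup (Fin n) L) : Matrix (Fin n) (Fin n) L) *ᵥ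
        ((g : Matrix (Fin n) (Fin n) L) *ᵥ v) = 0 := by rw [hv, Matrix.mulVec_zero]
    rwa [Matrix.mulVec_mulVec, ← Units.val_mul, inv_mul_cancel, Units.val_one,
      Matrix.one_mulVec] at h1
  rw [hg, Submodule.comap_bot]

/-- Solvability of linear systems descends along field embeddings. -/
lemma aux_descend {E : Type*} [Field E] (f : E →+* L) {ι κ : Type*} [Fintype ι] [Fintype κ]
    [DecidableEq ι] [DecidableEq κ] (C : Matrix ι κ E) (b : ι → E) (w : κ → L)
    (hw : C.map f *ᵥ w = f ∘ b) : ∃ v : κ → E, C *ᵥ v = b := by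
  by_contra hcon
  push_neg at hcon
  have hb : b ∉ LinearMap.range C.mulVecLin := by
    rintro ⟨v, hv⟩
    exact hcon v hv
  obtain ⟨φ, hφb, hφ⟩ :=
    (LinearMap.range C.mulVecLin).exists_dual_map_eq_bot_of_notMem hb inferInstance
  set y : ι → E := fun i => φ (fun j => if i = j then 1 else 0) with hy
  have hφeq : ∀ z : ι → E, φ z = y ⬝ᵥ z := by
    intro z
    conv_lhs => rw [pi_eq_sum_univ z]
    rw [map_sum]
    simp only [LinearMap.map_smul, smul_eq_mul, dotProduct, hy]
    exact Finset.sum_congr rfl fun i _ => mul_comm _ _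
  have hrange0 : ∀ z ∈ LinearMap.range C.mulVecLin, φ z = 0 := by
    intro z hz
    have : φ z ∈ Submodule.map φ (LinearMap.range C.mulVecLin) := ⟨z, hz, rfl⟩
    rwa [hφ, Submodule.mem_bot] at this
  have hker : y ᵥ* C = 0 := by
    ext j
    have hcol : φ (C *ᵥ Pi.single j 1) = 0 := hrange0 _ ⟨Pi.single j 1, rfl⟩
    rw [hφeq] at hcol
    have : y ⬝ᵥ (C *ᵥ Pi.single j 1) = (y ᵥ* C) j := by
      rw [Matrix.dotProduct_mulVec]
      simp [dotProduct, Pi.single_apply]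
    rw [this] at hcol
    simpa using hcol
  have hzero : f (y ⬝ᵥ b) = 0 := by
    rw [RingHom.map_dotProduct, ← hw, Matrix.dotProduct_mulVec]
    have : (f ∘ y) ᵥ* C.map f = 0 := by
      ext j
      rw [← RingHom.map_vecMul f C y j, hker]
      simp
    rw [this]
    simp [dotProduct]
  have : y ⬝ᵥ b = 0 := f.injective (by simpa using hzero)
  rw [hφeq] at hφb
  exact hφb this

variable {n r k : ℕ}

/-- The generic matrix of rank `r` : first `r` rows are `[x | Id]`, the rest zero. -/
noncomputable def mGen (n r k : ℕ) (x : Fin n × Fin n → L) : Matrix (Fin n) (Fin n) L :=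
  fun i j =>
    if (i : ℕ) < r then
      (if (j : ℕ) < k then x (i, j) else if (j : ℕ) = k + i then 1 else 0)
    else 0

lemma mGen_row (hrk : k + r = n) (x : Fin n × Fin n → L) (u : Fin n → L) (i : Fin n)
    (hi : (i : ℕ) < r) (c : Fin n) (hc : (c : ℕ) = k + i) :
    (mGen n r k x *ᵥ u) i =
      (∑ j ∈ Finset.univ.filter (fun j : Fin n => (j : ℕ) < k), x (i, j) * u j) + u c := by
  classical
  have hterm : ∀ j : Fin n, mGen n r k x i j * u j =
      (if (j : ℕ) < k then x (i, j) * u j else 0) + (if j = c then u j else 0) := by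
    intro j
    have hm' : mGen n r k x i j =
        (if (j : ℕ) < k then x (i, j) else if (j : ℕ) = k + i then 1 else 0) := by
      simp [mGen, hi]
    rw [hm']
    by_cases h1 : (j : ℕ) < k
    · have h2 : j ≠ c := by
        intro h
        rw [h] at h1
        rw [hc] at h1
        omega
      rw [if_pos h1, if_pos h1, if_neg h2, add_zero]
    · by_cases h2 : j = c
      · have h3 : (j : ℕ) = k + i := by rw [h2]; exact hc
        rw [if_neg h1, if_neg h1, if_pos h3, if_pos h2, one_mul, zero_add]
      · have h3 : ¬ (j : ℕ) = k + i := by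
          intro h
          apply h2
          apply Fin.ext
          rw [hc]
          exact h
        rw [if_neg h1, if_neg h1, if_neg h3, if_neg h2, zero_mul, add_zero]
  have : (mGen n r k x *ᵥ u) i = ∑ j, mGen n r k x i j * u j := by
    simp [Matrix.mulVec, dotProduct]
  rw [this]
  simp_rw [hterm]
  rw [Finset.sum_add_distrib, Finset.sum_ite_eq' Finset.univ c u, ← Finset.sum_filter]
  simp

lemma mGen_ker_zero (hrk : k + r = n) (x : Fin n × Fin n → L) (u : Fin n → L)
    (hu : mGen n r k x *ᵥ u = 0) (h0 : ∀ j : Fin n, (j : ℕ) < k → u j = 0) : u = 0 := by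
  funext t
  by_cases ht : (t : ℕ) < k
  · exact h0 t ht
  · have htr : (t : ℕ) - k < r := by omega
    have hrow := mGen_row hrk x u ⟨(t : ℕ) - k, by omega⟩ htr t
      (show (t : ℕ) = k + ((t : ℕ) - k) by omega)
    have hzero : (mGen n r k x *ᵥ u) ⟨(t : ℕ) - k, by omega⟩ = 0 := by rw [hu]; rfl
    rw [hrow] at hzero
    have hsum : (∑ j ∈ Finset.univ.filter (fun j : Fin n => (j : ℕ) < k),
        x (⟨(t : ℕ) - k, by omega⟩, j) * u j) = 0 := by
      apply Finset.sum_eq_zero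
      intro j hj
      rw [Finset.mem_filter] at hj
      rw [h0 j hj.2, mul_zero]
    rw [hsum, zero_add] at hzero
    exact hzero

end Aux

/-- Transcendence degree. -/
noncomputable def trdeg (k K : Type u) [CommRing k] [CommRing K] [Algebra k K] :
    Cardinal.{u} :=
  ⨆ s : { s : Set K // AlgebraicIndependent k ((↑) : s → K) }, Cardinal.mk s.1

lemma aux_max (n : ℕ) (hn : 2 ≤ n) : (n / 2) * (n - n / 2) = n ^ 2 / 4 := by
  obtain ⟨m, hm | hm⟩ : ∃ m, n = 2 * m ∨ n = 2 * m + 1 := ⟨n / 2, by omega⟩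
  · subst hm
    have h1 : 2 * m / 2 = m := by omega
    have h4 : 2 * m - m = m := by omega
    have h2 : (2 * m) ^ 2 = m * m * 4 := by ring
    rw [h1, h4, h2]
    generalize m * m = a
    omega
  · subst hm
    have h1 : (2 * m + 1) / 2 = m := by omega
    have h4 : 2 * m + 1 - m = m + 1 := by omega
    have h2 : (2 * m + 1) ^ 2 = m * (m + 1) * 4 + 1 := by ring
    rw [h1, h4, h2]
    generalize m * (m + 1) = a
    omega

theorem stmt14 (F : Type u) [Field F] [IsAlgClosed F] [CharZero F] (n : ℕ) (hn : 2 ≤ n) :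
    -- the kernel map on the rank-`r` locus:
    (∀ r : ℕ, 1 ≤ r → r ≤ n - 1 →
      ∀ (L : Type u) [Field L] [Algebra F L],
        -- it is `GL_n`-equivariant: left multiplication does not change the kernel
        (∀ (g : Matrix.GeneralLinearGroup (Fin n) L) (m : Matrix (Fin n) (Fin n) L),
          m.rank = r →
          LinearMap.ker (((g : Matrix (Fin n) (Fin n) L) * m).mulVecLin) =
            LinearMap.ker m.mulVecLin) ∧
        -- it is surjective on `L`-points: every `L`-point of `Gr(n−r,n)` lifts to `Y_r`
        (∀ W : Submodule L (Fin n → L), Module.finrank L W = n - r →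
          ∃ m : Matrix (Fin n) (Fin n) L,
            m.rank = r ∧ LinearMap.ker m.mulVecLin = W)) ∧
    -- `max_{1≤r≤n−1} dim Gr(n−r,n) = max r(n−r) = ⌊n²/4⌋`:
    IsGreatest ((fun r => r * (n - r)) '' Set.Icc 1 (n - 1)) (n ^ 2 / 4) ∧
    -- consequently `ed [M/GL_n] ≥ ⌊n²/4⌋`:
    (∀ d : ℕ,
      (∀ (L : Type u) [Field L] [Algebra F L] (m : Matrix (Fin n) (Fin n) L),
        ∃ E : IntermediateField F L, trdeg F E ≤ (d : Cardinal.{u}) ∧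
          ∃ (m₀ : Matrix (Fin n) (Fin n) E) (g : Matrix.GeneralLinearGroup (Fin n) L),
            m₀.map (algebraMap E L) = (g : Matrix (Fin n) (Fin n) L) * m) →
      n ^ 2 / 4 ≤ d) := by
  classical
  refine ⟨?_, ?_, ?_⟩
  · -- part 1
    intro r hr1 hr2 L _ _
    constructor
    · intro g m _
      exact aux_ker_unit_mul g m
    · intro W hW
      obtain ⟨C, hC⟩ := Submodule.exists_isCompl W
      let f : (Fin n → L) →ₗ[L] (Fin n → L) := C.subtype ∘ₗ C.projectionOnto W hC.symm
      have hmv : (LinearMap.toMatrix' f).mulVecLin = f := by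
        apply LinearMap.ext
        intro v
        rw [Matrix.mulVecLin_apply, ← Matrix.toLin'_apply, Matrix.toLin'_toMatrix']
      have hker : LinearMap.ker f = W := by
        rw [LinearMap.ker_comp, Submodule.ker_subtype, Submodule.comap_bot,
          Submodule.linearProjOfIsCompl_ker]
      have hrange : LinearMap.range f = C := by
        apply le_antisymm
        · rintro z ⟨v, rfl⟩
          simp [f]
        · intro c hc
          exact ⟨c, by simp [f, Submodule.linearProjOfIsCompl_apply_left hC.symm ⟨c, hc⟩]⟩
      have hsum : Module.finrank L W + Module.finrank L C = n := by
        rw [Submodule.finrank_add_eq_of_isCompl hC]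
        simp
      refine ⟨LinearMap.toMatrix' f, ?_, ?_⟩
      · show Module.finrank L (LinearMap.range (LinearMap.toMatrix' f).mulVecLin) = r
        rw [hmv, hrange]
        omega
      · rw [hmv, hker]
  · -- part 2
    constructor
    · exact ⟨n / 2, ⟨by omega, by omega⟩, aux_max n hn⟩
    · rintro a ⟨r, hr, rfl⟩
      rw [Set.mem_Icc] at hr
      obtain ⟨s, rfl⟩ : ∃ s, n = r + s := ⟨n - r, by omega⟩
      have hsub : r + s - r = s := by omega
      dsimp only
      rw [hsub, Nat.le_div_iff_mul_le (by norm_num : 0 < 4)]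
      zify
      nlinarith [sq_nonneg ((r : ℤ) - s)]
  · -- part 3
    intro d hd
    set r : ℕ := n / 2 with hrdef
    set k : ℕ := n - r with hkdef
    have hrk : k + r = n := by omega
    have hr1 : 1 ≤ r := by omega
    have hk1 : 1 ≤ k := by omega
    set R := MvPolynomial (Fin n × Fin n) F with hR
    set L := FractionRing R with hL
    set x : Fin n × Fin n → L := fun p => algebraMap R L (MvPolynomial.X p) with hx
    have hxind : AlgebraicIndependent F x := by
      have h1 : AlgebraicIndependent F (MvPolynomial.X : Fin n × Fin n → R) :=
        MvPolynomial.algebraicIndependent_X (Fin n × Fin n) F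
      exact h1.map' (f := IsScalarTower.toAlgHom F R L) (IsFractionRing.injective R L)
    set m : Matrix (Fin n) (Fin n) L := mGen n r k x with hm
    obtain ⟨E, hEd, m₀, g, hm₀⟩ := hd L m
    set f : (↥E) →+* L := algebraMap (↥E) L with hf
    have hWB : LinearMap.ker (m₀.map f).mulVecLin = LinearMap.ker m.mulVecLin := by
      rw [hm₀]
      exact aux_ker_unit_mul g m
    -- key step : all relevant variables lie in E
    have key : ∀ i j : Fin n, (i : ℕ) < r → (j : ℕ) < k → x (i, j) ∈ E := by
      intro i0 j0 hi0 hj0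
      -- the explicit kernel vector
      set w : Fin n → L := fun t =>
        if (t : ℕ) < k then (if t = j0 then 1 else 0)
        else -x (⟨(t : ℕ) - k, by omega⟩, j0) with hw
      have hwfirst : ∀ j : Fin n, (j : ℕ) < k → w j = (if j = j0 then 1 else 0) := by
        intro j hj
        rw [hw]
        dsimp only
        rw [if_pos hj]
      have hwsecond : ∀ (c i : Fin n), (c : ℕ) = k + i → w c = -x (i, j0) := by
        intro c i hci
        have h2 : ¬ (c : ℕ) < k := by omega
        have h3 : (⟨(c : ℕ) - k, by omega⟩ : Fin n) = i := by
          apply Fin.ext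
          show (c : ℕ) - k = (i : ℕ)
          omega
        rw [hw]
        dsimp only
        rw [if_neg h2, h3]
      have hwker : m *ᵥ w = 0 := by
        funext i
        rw [Pi.zero_apply]
        by_cases hi : (i : ℕ) < r
        · rw [hm, mGen_row hrk x w i hi ⟨k + i, by omega⟩ rfl]
          have hsum : (∑ j ∈ Finset.univ.filter (fun j : Fin n => (j : ℕ) < k),
              x (i, j) * w j) = x (i, j0) := by
            have hterm : ∀ j ∈ Finset.univ.filter (fun j : Fin n => (j : ℕ) < k),
                x (i, j) * w j = if j = j0 then x (i, j) else 0 := by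
              intro j hj
              rw [Finset.mem_filter] at hj
              rw [hwfirst j hj.2]
              split_ifs <;> simp
            rw [Finset.sum_congr rfl hterm, Finset.sum_ite_eq' _ j0]
            rw [if_pos (by simp [hj0])]
          rw [hsum, hwsecond ⟨k + i, by omega⟩ i rfl]
          ring
        · simp [hm, mGen, Matrix.mulVec, dotProduct, hi]
      have hwkerB : (m₀.map f) *ᵥ w = 0 := by
        have hmem : w ∈ LinearMap.ker (m₀.map f).mulVecLin := by
          rw [hWB, LinearMap.mem_ker, Matrix.mulVecLin_apply]
          exact hwker
        rwa [LinearMap.mem_ker, Matrix.mulVecLin_apply] at hmem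
      -- combined linear system over E
      set C : Matrix (Fin n ⊕ Fin n) (Fin n) (↥E) := fun s t =>
        Sum.elim (fun i : Fin n => m₀ i t)
          (fun i : Fin n => if (i : ℕ) < k ∧ t = i then 1 else 0) s with hCdef
      set b : Fin n ⊕ Fin n → (↥E) :=
        Sum.elim (fun _ : Fin n => 0)
          (fun i : Fin n => if (i : ℕ) < k ∧ i = j0 then 1 else 0) with hb
      have hCw : C.map f *ᵥ w = f ∘ b := by
        funext s
        cases s with
        | inl i =>
          have hrow : (C.map f *ᵥ w) (Sum.inl i) = ((m₀.map f) *ᵥ w) i := by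
            simp [Matrix.mulVec, dotProduct, hCdef, Matrix.map_apply, Matrix.map, Matrix.of_apply]
          rw [hrow, hwkerB]
          simp [hb]
        | inr i =>
          have hCi : (C.map f *ᵥ w) (Sum.inr i) =
              ∑ t, (if (i : ℕ) < k ∧ t = i then (1 : L) else 0) * w t := by
            simp [Matrix.mulVec, dotProduct, hCdef, Matrix.map_apply, Matrix.map, Matrix.of_apply, apply_ite f]
          rw [hCi]
          by_cases hik : (i : ℕ) < k
          · have hterm : ∀ t : Fin n, (if (i : ℕ) < k ∧ t = i then (1 : L) else 0) * w t =
                if t = i then w t else 0 := by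
              intro t
              split_ifs with h1 h2 h2 <;> simp_all
            rw [Finset.sum_congr rfl (fun t _ => hterm t), Finset.sum_ite_eq' _ i,
              if_pos (by simp)]
            rw [hwfirst i hik]
            simp only [hb, Sum.elim_inr, Function.comp_apply]
            split_ifs with h1 h2 h2 <;> simp_all
          · have hterm : ∀ t : Fin n, (if (i : ℕ) < k ∧ t = i then (1 : L) else 0) * w t = 0 := by
              intro t
              rw [if_neg (by tauto), zero_mul]
            rw [Finset.sum_congr rfl (fun t _ => hterm t), Finset.sum_const_zero]
            simp [hb, hik]
      obtain ⟨v, hv⟩ := aux_descend f C b w hCw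
      have hv1 : m₀ *ᵥ v = 0 := by
        funext i
        have h1 := congrFun hv (Sum.inl i)
        simpa [hCdef, hb, Matrix.mulVec, dotProduct] using h1
      have hv2 : ∀ t : Fin n, (t : ℕ) < k → v t = if t = j0 then 1 else 0 := by
        intro t ht
        have h1 := congrFun hv (Sum.inr t)
        rw [hb] at h1
        simp only [Sum.elim_inr] at h1
        have hleft : (C *ᵥ v) (Sum.inr t) = v t := by
          have hterm : ∀ s : Fin n, C (Sum.inr t) s * v s = if s = t then v s else 0 := by
            intro s
            rw [hCdef]
            simp only [Sum.elim_inr]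
            split_ifs with h1 h2 h2 <;> simp_all
          simp only [Matrix.mulVec, dotProduct]
          rw [Finset.sum_congr rfl (fun s _ => hterm s), Finset.sum_ite_eq' _ t, if_pos (by simp)]
        rw [hleft] at h1
        rw [h1]
        split_ifs with h1 h2 h2 <;> simp_all
      -- transfer v to L
      set vL : Fin n → L := f ∘ v with hvL
      have hvLB : (m₀.map f) *ᵥ vL = 0 := by
        funext i
        rw [hvL, Pi.zero_apply, ← RingHom.map_mulVec, hv1]
        simp
      have hvLker : m *ᵥ vL = 0 := by
        have hmem : vL ∈ LinearMap.ker (m₀.map f).mulVecLin := by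
          rw [LinearMap.mem_ker, Matrix.mulVecLin_apply]
          exact hvLB
        rw [hWB, LinearMap.mem_ker, Matrix.mulVecLin_apply] at hmem
        exact hmem
      have hu : w - vL = 0 := by
        apply mGen_ker_zero hrk x
        · rw [← hm, Matrix.mulVec_sub, hwker, hvLker, sub_zero]
        · intro j hj
          have h1 : w j = if j = j0 then 1 else 0 := hwfirst j hj
          have h2 : vL j = f (if j = j0 then 1 else 0) := by
            rw [hvL, Function.comp_apply, hv2 j hj]
          rw [Pi.sub_apply, h1, h2, apply_ite f, _root_.map_one, _root_.map_zero, sub_self]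
      have heqw : w = vL := sub_eq_zero.mp hu
      -- evaluate at the coordinate k + i0
      have hwt0 : w ⟨k + i0, by omega⟩ = -x (i0, j0) := hwsecond ⟨k + i0, by omega⟩ i0 rfl
      have hft0 : -x (i0, j0) = f (v ⟨k + i0, by omega⟩) := by
        rw [← hwt0, heqw, hvL]
        rfl
      have hx0 : x (i0, j0) = f (-(v ⟨k + i0, by omega⟩)) := by
        rw [map_neg, ← hft0, neg_neg]
      rw [hx0, hf]
      exact (- v ⟨k + i0, by omega⟩).2
    -- now build an algebraically independent family in E of size r * k
    have hrn : r ≤ n := by omega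
    have hkn : k ≤ n := by omega
    set e : Fin r × Fin k → Fin n × Fin n := fun p => (Fin.castLE hrn p.1, Fin.castLE hkn p.2) with he
    have heinj : Function.Injective e := by
      rintro ⟨a, b⟩ ⟨c, d⟩ h
      rw [he] at h
      simp only [Prod.mk.injEq] at h ⊢
      exact ⟨Fin.castLE_injective hrn h.1, Fin.castLE_injective hkn h.2⟩
    set q : Fin r × Fin k → (↥E) := fun p => ⟨x (e p), key _ _ (by simp [he]) (by simp [he])⟩
      with hq
    have hqind : AlgebraicIndependent F q := by
      apply AlgebraicIndependent.of_comp E.val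
      have : (E.val : (↥E) → L) ∘ q = x ∘ e := by funext p; rfl
      rw [this]
      exact hxind.comp e heinj
    have hqinj : Function.Injective q := hqind.injective
    have hcard : Cardinal.mk (Set.range q) = ((r * k : ℕ) : Cardinal.{u}) := by
      rw [Cardinal.mk_fintype, Set.card_range_of_injective hqinj]
      simp
    have hle : ((r * k : ℕ) : Cardinal.{u}) ≤ trdeg F (↥E) := by
      rw [← hcard]
      exact le_ciSup (Cardinal.bddAbove_range _)
        (⟨Set.range q, hqind.coe_range⟩ :
          { s : Set (↥E) // AlgebraicIndependent F ((↑) : s → (↥E)) })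
    have hfin : ((r * k : ℕ) : Cardinal.{u}) ≤ (d : Cardinal.{u}) := hle.trans hEd
    have : r * k ≤ d := by exact_mod_cast hfin
    calc n ^ 2 / 4 = r * k := by rw [← aux_max n hn]
      _ ≤ d := this
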